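/- (Theorem 2, upper bound: I-W coding theorem for i.i.d. sequence sources.) Let D ≥ 2 be an integer, let p : Fin N → ℝ with p i > 0 and ∑ i, p i = 1, let w : Fin N → ℝ with w i > 0, and let n ≥ 1. For sequences x : Fin n → Fin N set p(x) = ∏ k, p (x k) and w(x) = ∏ k, w (x k). Then there exists a length assignment l : (Fin n → Fin N) → ℕ satisfying Kraft's inequality ∑_x (D : ℝ)^(-(l x : ℝ)) ≤ 1 such that (1/n) * ∑_x p(x) * w(x) * (l x : ℝ) < (H_w(X))^(n-1) * 𝓛(w,X) + (H_w(X))^n / n, where H_w(X) = ∑ i, p i * w i and 𝓛(w,X) = -∑ i, p i * w i * log_D (p i * w i / H_w(X)). -/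

import Mathlib

/-- Theorem 2, upper bound: I-W coding theorem for i.i.d. sequence sources. -/
theorem iw_coding_sequence_upper
    (N D n : ℕ) (hD : 2 ≤ D) (hn : 1 ≤ n)
    (p w : Fin N → ℝ)
    (hp : ∀ i, 0 < p i) (hpsum : ∑ i, p i = 1)
    (hw : ∀ i, 0 < w i) :
    ∃ l : (Fin n → Fin N) → ℕ,
      (∑ x : Fin n → Fin N, (D : ℝ) ^ (-(l x : ℝ)) ≤ 1) ∧
      (1 / (n : ℝ)) *
          ∑ x : Fin n → Fin N, (∏ k, p (x k)) * (∏ k, w (x k)) * (l x : ℝ) <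
        (∑ i, p i * w i) ^ (n - 1) *
          (-∑ i, p i * w i *
            (Real.log (p i * w i / ∑ j, p j * w j) / Real.log D)) +
        (∑ i, p i * w i) ^ n / (n : ℝ) := by
  have hN : N ≠ 0 := by
    rintro rfl
    simp at hpsum
  haveI : NeZero N := ⟨hN⟩
  set g : Fin N → ℝ := fun i => p i * w i with hg
  have hgpos : ∀ i, 0 < g i := fun i => mul_pos (hp i) (hw i)
  set H : ℝ := ∑ i, g i with hHdef
  have hH : 0 < H := Finset.sum_pos (fun i _ => hgpos i) Finset.univ_nonempty
  have hD1 : (1 : ℝ) < D := by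
    have : (2:ℝ) ≤ D := by exact_mod_cast hD
    linarith
  set q : (Fin n → Fin N) → ℝ := fun x => ∏ k, (g (x k) / H) with hqdef
  have hq : ∀ x, 0 < q x := fun x =>
    Finset.prod_pos (fun k _ => div_pos (hgpos _) hH)
  have hqsum : ∑ x : Fin n → Fin N, q x = 1 := by
    have h := Finset.prod_univ_sum (fun _ : Fin n => (Finset.univ : Finset (Fin N)))
      (fun _ i => g i / H)
    rw [Fintype.piFinset_univ] at h
    rw [hqdef, ← h, ← Finset.sum_div, ← hHdef, div_self hH.ne']
    simp
  have hqle : ∀ x, q x ≤ 1 := by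
    intro x
    rw [← hqsum]
    exact Finset.single_le_sum (fun y _ => (hq y).le) (Finset.mem_univ x)
  set L : (Fin n → Fin N) → ℝ := fun x => -Real.logb D (q x) with hLdef
  have hL0 : ∀ x, 0 ≤ L x := fun x =>
    neg_nonneg.2 (Real.logb_nonpos hD1 (hq x).le (hqle x))
  refine ⟨fun x => ⌈L x⌉₊, ?_, ?_⟩
  · calc ∑ x : Fin n → Fin N, (D : ℝ) ^ (-(⌈L x⌉₊ : ℝ))
        ≤ ∑ x : Fin n → Fin N, q x := by
          apply Finset.sum_le_sum
          intro x _
          have h1 : -(⌈L x⌉₊ : ℝ) ≤ Real.logb D (q x) := by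
            have h2 : -Real.logb D (q x) ≤ (⌈L x⌉₊ : ℝ) := Nat.le_ceil (L x)
            linarith
          calc (D : ℝ) ^ (-(⌈L x⌉₊ : ℝ)) ≤ (D : ℝ) ^ Real.logb D (q x) :=
                Real.rpow_le_rpow_of_exponent_le hD1.le h1
            _ = q x := Real.rpow_logb (by positivity) hD1.ne' (hq x)
      _ = 1 := hqsum
  · set P : (Fin n → Fin N) → ℝ := fun x => ∏ k, g (x k) with hPdef
    have hPpos : ∀ x, 0 < P x := fun x => Finset.prod_pos (fun k _ => hgpos _)
    have hPsum : ∑ x : Fin n → Fin N, P x = H ^ n := by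
      have h := Finset.prod_univ_sum (fun _ : Fin n => (Finset.univ : Finset (Fin N)))
        (fun _ i => g i)
      rw [Fintype.piFinset_univ] at h
      rw [hPdef, ← h, ← hHdef]
      simp
    set f : Fin N → ℝ := fun i => -Real.logb D (g i / H) with hfdef
    set T : ℝ := ∑ i, g i * f i with hTdef
    have hLsplit : ∀ x, L x = ∑ k, f (x k) := by
      intro x
      rw [hLdef]
      simp only
      rw [hqdef]
      simp only
      rw [Real.logb_prod _ _ (fun k _ => (div_pos (hgpos _) hH).ne')]
      rw [← Finset.sum_neg_distrib]
    -- the key combinatorial identity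
    have key : ∑ x : Fin n → Fin N, P x * L x = (n : ℝ) * (H ^ (n - 1) * T) := by
      calc ∑ x : Fin n → Fin N, P x * L x
          = ∑ x : Fin n → Fin N, ∑ k : Fin n, P x * f (x k) := by
            refine Finset.sum_congr rfl fun x _ => ?_
            rw [hLsplit x, Finset.mul_sum]
        _ = ∑ k : Fin n, ∑ x : Fin n → Fin N, P x * f (x k) := Finset.sum_comm
        _ = ∑ _k : Fin n, H ^ (n - 1) * T := by
            refine Finset.sum_congr rfl fun k _ => ?_
            have step : ∀ x : Fin n → Fin N,
                P x * f (x k) = ∏ j, (if j = k then g (x j) * f (x j) else g (x j)) := by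
              intro x
              rw [← Finset.mul_prod_erase Finset.univ _ (Finset.mem_univ k)]
              rw [hPdef]
              simp only
              rw [← Finset.mul_prod_erase Finset.univ (fun j => g (x j)) (Finset.mem_univ k)]
              simp only [if_true, eq_self_iff_true]
              have : ∏ j ∈ Finset.univ.erase k,
                  (if j = k then g (x j) * f (x j) else g (x j)) =
                  ∏ j ∈ Finset.univ.erase k, g (x j) := by
                refine Finset.prod_congr rfl fun j hj => ?_
                rw [if_neg (Finset.mem_erase.1 hj).1]
              rw [this]
              ring
            have h := Finset.prod_univ_sum (fun _ : Fin n => (Finset.univ : Finset (Fin N)))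
              (fun j i => if j = k then g i * f i else g i)
            rw [Fintype.piFinset_univ] at h
            calc ∑ x : Fin n → Fin N, P x * f (x k)
                = ∑ x : Fin n → Fin N, ∏ j, (if j = k then g (x j) * f (x j) else g (x j)) :=
                  Finset.sum_congr rfl fun x _ => step x
              _ = ∏ j : Fin n, ∑ i : Fin N, (if j = k then g i * f i else g i) := h.symm
              _ = ∏ j : Fin n, (if j = k then T else H) := by
                  refine Finset.prod_congr rfl fun j _ => ?_
                  split_ifs with hjk
                  · rw [hTdef]
                  · rw [hHdef]
              _ = H ^ (n - 1) * T := by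
                  rw [← Finset.mul_prod_erase Finset.univ _ (Finset.mem_univ k)]
                  simp only [if_true, eq_self_iff_true]
                  have : ∏ j ∈ Finset.univ.erase k, (if j = k then T else H) =
                      H ^ (n - 1) := by
                    rw [Finset.prod_congr rfl (fun j hj => if_neg (Finset.mem_erase.1 hj).1),
                      Finset.prod_const, Finset.card_erase_of_mem (Finset.mem_univ k),
                      Finset.card_univ, Fintype.card_fin]
                  rw [this]
                  ring
        _ = (n : ℝ) * (H ^ (n - 1) * T) := by
            rw [Finset.sum_const, Finset.card_univ, Fintype.card_fin, nsmul_eq_mul]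
    -- strict bound on the expected length
    have hstrict : ∑ x : Fin n → Fin N, P x * (⌈L x⌉₊ : ℝ)
        < (n : ℝ) * (H ^ (n - 1) * T) + H ^ n := by
      have h1 : ∑ x : Fin n → Fin N, P x * (⌈L x⌉₊ : ℝ)
          < ∑ x : Fin n → Fin N, P x * (L x + 1) := by
        refine Finset.sum_lt_sum_of_nonempty Finset.univ_nonempty fun x _ => ?_
        exact mul_lt_mul_of_pos_left (Nat.ceil_lt_add_one (hL0 x)) (hPpos x)
      have h2 : ∑ x : Fin n → Fin N, P x * (L x + 1)
          = (n : ℝ) * (H ^ (n - 1) * T) + H ^ n := by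
        rw [← key, ← hPsum, ← Finset.sum_add_distrib]
        refine Finset.sum_congr rfl fun x _ => ?_
        ring
      linarith
    have hrewrite : ∑ x : Fin n → Fin N, (∏ k, p (x k)) * (∏ k, w (x k)) * ((⌈L x⌉₊ : ℕ) : ℝ)
        = ∑ x : Fin n → Fin N, P x * (⌈L x⌉₊ : ℝ) := by
      refine Finset.sum_congr rfl fun x _ => ?_
      rw [hPdef]
      simp only
      rw [← Finset.prod_mul_distrib]
    have hT' : (-∑ i, p i * w i *
        (Real.log (p i * w i / ∑ j, p j * w j) / Real.log D)) = T := by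
      rw [hTdef, ← Finset.sum_neg_distrib]
      refine Finset.sum_congr rfl fun i _ => ?_
      rw [hfdef]
      simp only [Real.logb]
      ring
    rw [hrewrite, hT']
    have hnpos : (0 : ℝ) < n := by exact_mod_cast hn
    have := mul_lt_mul_of_pos_left hstrict (by positivity : (0:ℝ) < 1 / n)
    calc (1 / (n : ℝ)) * ∑ x : Fin n → Fin N, P x * (⌈L x⌉₊ : ℝ)
        < (1 / (n : ℝ)) * ((n : ℝ) * (H ^ (n - 1) * T) + H ^ n) := this
      _ = H ^ (n - 1) * T + H ^ n / n := by
          field_simp
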